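/- Fix a vertex i ∈ I, finite-dimensional complex vector spaces (𝔍_j)_{j∈I} and W_i, a representation y = (y_h)_{h∈H} of the doubled quiver on (𝔍_j), a linear map g_i : W_i → 𝔍_i, a finite-dimensional complex vector space X, and an endomorphism z_a ∈ End(X) for every loop a ∈ H at i. Assume that the smallest I-graded subspace of ⊕_{j∈I} 𝔍_j that contains ⊕_{j≠i} 𝔍_j and the image of g_i, and is invariant under all the maps y_h (h ∈ H), is the whole space ⊕_{j∈I} 𝔍_j. Then the linear map ψ : (⊕_{h∈H, s(h)=i} Hom(X, 𝔍_{t(h)})) ⊕ Hom(X, W_i) → Hom(X, 𝔍_i) defined by ψ(η, θ) = Σ_{h∈H: s(h)=i} ε(h)·( y_{h̄} ∘ η_h + η_{h̄} ∘ z_h ) + g_i ∘ θ, where the term η_{h̄} ∘ z_h is understood to be 0 unless h is a loop at i, is surjective. -/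

import Mathlib

/-! Doubled quiver setup: a quiver has vertex set `I` and arrow set `Ω` with source and
target maps `s t : Ω → I`.  The doubled quiver has arrow set `H = Ω ⊕ Ω`, the second
copy consisting of the reversed arrows; `bar` is the involution exchanging the copies,
and `eps` is `1` on `Ω` and `−1` on `Ω̄`. -/

/-- The arrow set of the doubled quiver. -/
abbrev DblH (Ω : Type) : Type := Ω ⊕ Ω

/-- Source map of the doubled quiver. -/
def dblSrc {I Ω : Type} (s t : Ω → I) : DblH Ω → I := Sum.elim s t

/-- Target map of the doubled quiver. -/
def dblTgt {I Ω : Type} (s t : Ω → I) : DblH Ω → I := Sum.elim t s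

/-- The involution `h ↦ h̄` of the doubled quiver. -/
def dblBar {Ω : Type} : DblH Ω → DblH Ω := Sum.elim Sum.inr Sum.inl

/-- `ε(h) = 1` for `h ∈ Ω`, `ε(h) = −1` for `h ∈ Ω̄`. -/
def dblEps {Ω : Type} : DblH Ω → ℂ := Sum.elim (fun _ => 1) (fun _ => -1)

theorem dblSrc_bar {I Ω : Type} (s t : Ω → I) (h : DblH Ω) :
    dblSrc s t (dblBar h) = dblTgt s t h := by cases h <;> rfl

theorem dblTgt_bar {I Ω : Type} (s t : Ω → I) (h : DblH Ω) :
    dblTgt s t (dblBar h) = dblSrc s t h := by cases h <;> rfl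

/-- Transport of a linear map along an equality of vertices (cast of the codomain). -/
def cmap {I : Type} (J : I → Type) [∀ j, AddCommGroup (J j)] [∀ j, Module ℂ (J j)]
    {X : Type} [AddCommGroup X] [Module ℂ X] {a b : I} (hab : a = b)
    (f : X →ₗ[ℂ] J a) : X →ₗ[ℂ] J b := hab ▸ f

set_option linter.unusedSectionVars false

section aux
variable {I Ω : Type} [Fintype I] [Fintype Ω] [DecidableEq I]
  (s t : Ω → I)
  (J : I → Type) [∀ j, AddCommGroup (J j)] [∀ j, Module ℂ (J j)]
  (i : I)
  (Wi : Type) [AddCommGroup Wi] [Module ℂ Wi]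
  (y : ∀ h : DblH Ω, J (dblSrc s t h) →ₗ[ℂ] J (dblTgt s t h))
  (gi : Wi →ₗ[ℂ] J i)
  (X : Type) [AddCommGroup X] [Module ℂ X]
  (z : DblH Ω → Module.End ℂ X)

/-- cast of vectors -/
def cvec {a b : I} (e : a = b) (v : J a) : J b := e ▸ v

@[simp] theorem cvec_refl {a : I} (e : a = a) (v : J a) : cvec J e v = v := rfl

@[simp] theorem cmap_refl {X : Type} [AddCommGroup X] [Module ℂ X] {a : I} (e : a = a)
    (f : X →ₗ[ℂ] J a) : cmap J e f = f := rfl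

theorem cmap_add {X : Type} [AddCommGroup X] [Module ℂ X] {a b : I} (e : a = b)
    (f g : X →ₗ[ℂ] J a) : cmap J e (f + g) = cmap J e f + cmap J e g := by subst e; rfl

theorem cmap_smul {X : Type} [AddCommGroup X] [Module ℂ X] {a b : I} (e : a = b) (c : ℂ)
    (f : X →ₗ[ℂ] J a) : cmap J e (c • f) = c • cmap J e f := by subst e; rfl

@[simp] theorem cmap_zero {X : Type} [AddCommGroup X] [Module ℂ X] {a b : I} (e : a = b) :
    cmap J e (0 : X →ₗ[ℂ] J a) = 0 := by subst e; rfl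

theorem cmap_smulRight {X : Type} [AddCommGroup X] [Module ℂ X] {a b : I} (e : a = b)
    (f : X →ₗ[ℂ] ℂ) (v : J a) :
    cmap J e (f.smulRight v) = f.smulRight (cvec J e v) := by subst e; rfl

/-- The linear map ψ. -/
def Psi : ((∀ h : DblH Ω, X →ₗ[ℂ] J (dblTgt s t h)) × (X →ₗ[ℂ] Wi)) →ₗ[ℂ] (X →ₗ[ℂ] J i) where
  toFun p := (∑ h : DblH Ω,
      if c : dblSrc s t h = i then
        dblEps h •
          cmap J ((dblTgt_bar s t h).trans c)
            ((y (dblBar h)) ∘ₗ (cmap J (dblSrc_bar s t h).symm (p.1 h)) +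
              (if dblTgt s t h = i then (p.1 (dblBar h)) ∘ₗ (z h) else 0))
      else 0) + gi ∘ₗ p.2
  map_add' p q := by
    have key : ∀ h : DblH Ω,
        (if c : dblSrc s t h = i then
          dblEps h •
            cmap J ((dblTgt_bar s t h).trans c)
              ((y (dblBar h)) ∘ₗ (cmap J (dblSrc_bar s t h).symm ((p + q).1 h)) +
                (if dblTgt s t h = i then ((p + q).1 (dblBar h)) ∘ₗ (z h) else 0))
          else 0)
        = (if c : dblSrc s t h = i then
          dblEps h •
            cmap J ((dblTgt_bar s t h).trans c)
              ((y (dblBar h)) ∘ₗ (cmap J (dblSrc_bar s t h).symm (p.1 h)) +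
                (if dblTgt s t h = i then (p.1 (dblBar h)) ∘ₗ (z h) else 0))
          else 0)
        + (if c : dblSrc s t h = i then
          dblEps h •
            cmap J ((dblTgt_bar s t h).trans c)
              ((y (dblBar h)) ∘ₗ (cmap J (dblSrc_bar s t h).symm (q.1 h)) +
                (if dblTgt s t h = i then (q.1 (dblBar h)) ∘ₗ (z h) else 0))
          else 0) := by
      intro h
      by_cases c : dblSrc s t h = i
      · rw [dif_pos c, dif_pos c, dif_pos c]
        by_cases cl : dblTgt s t h = i
        · simp only [if_pos cl, Prod.fst_add, Pi.add_apply, cmap_add, LinearMap.comp_add,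
            LinearMap.add_comp, smul_add]
          try abel
        · simp only [if_neg cl, Prod.fst_add, Pi.add_apply, cmap_add, LinearMap.comp_add,
            LinearMap.add_comp, smul_add, add_zero]
          try abel
      · simp [c]
    simp only [Finset.sum_congr rfl fun h _ => key h, Finset.sum_add_distrib,
      Prod.snd_add, LinearMap.comp_add]
    abel
  map_smul' c p := by
    have key : ∀ h : DblH Ω,
        (if hc : dblSrc s t h = i then
          dblEps h •
            cmap J ((dblTgt_bar s t h).trans hc)
              ((y (dblBar h)) ∘ₗ (cmap J (dblSrc_bar s t h).symm ((c • p).1 h)) +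
                (if dblTgt s t h = i then ((c • p).1 (dblBar h)) ∘ₗ (z h) else 0))
          else 0)
        = c • (if hc : dblSrc s t h = i then
          dblEps h •
            cmap J ((dblTgt_bar s t h).trans hc)
              ((y (dblBar h)) ∘ₗ (cmap J (dblSrc_bar s t h).symm (p.1 h)) +
                (if dblTgt s t h = i then (p.1 (dblBar h)) ∘ₗ (z h) else 0))
          else 0) := by
      intro h
      by_cases hc : dblSrc s t h = i
      · rw [dif_pos hc, dif_pos hc]
        by_cases cl : dblTgt s t h = i
        · simp only [if_pos cl, Prod.smul_fst, Pi.smul_apply, cmap_smul, LinearMap.comp_smul,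
            LinearMap.smul_comp, ← smul_add, smul_comm c]
        · simp only [if_neg cl, Prod.smul_fst, Pi.smul_apply, cmap_smul, LinearMap.comp_smul,
            LinearMap.smul_comp, add_zero, smul_comm c]
      · simp [hc]
    simp only [Finset.sum_congr rfl fun h _ => key h, ← Finset.smul_sum,
      Prod.smul_snd, LinearMap.comp_smul, RingHom.id_apply, smul_add]

@[simp] theorem Psi_apply (p) :
    Psi s t J i Wi y gi X z p = (∑ h : DblH Ω,
      if c : dblSrc s t h = i then
        dblEps h •
          cmap J ((dblTgt_bar s t h).trans c)
            ((y (dblBar h)) ∘ₗ (cmap J (dblSrc_bar s t h).symm (p.1 h)) +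
              (if dblTgt s t h = i then (p.1 (dblBar h)) ∘ₗ (z h) else 0))
      else 0) + gi ∘ₗ p.2 := rfl


theorem Psi_zero_left (th : X →ₗ[ℂ] Wi) : Psi s t J i Wi y gi X z (0, th) = gi ∘ₗ th := by
  rw [Psi_apply]
  rw [Finset.sum_eq_zero, zero_add]
  intro h _
  by_cases c : dblSrc s t h = i
  · rw [dif_pos c]
    simp
  · rw [dif_neg c]

theorem smulRight_comp_left {Y Z : Type} [AddCommGroup Y] [Module ℂ Y]
    [AddCommGroup Z] [Module ℂ Z] (g : Y →ₗ[ℂ] Z) (f : X →ₗ[ℂ] ℂ) (v : Y) :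
    g ∘ₗ f.smulRight v = f.smulRight (g v) := by
  ext x; simp

theorem smulRight_comp_right {Y : Type} [AddCommGroup Y] [Module ℂ Y]
    (f : X →ₗ[ℂ] ℂ) (v : Y) (e : Module.End ℂ X) :
    f.smulRight v ∘ₗ e = (f ∘ₗ e).smulRight v := by
  ext x; simp

theorem Psi_single [DecidableEq Ω] (h : DblH Ω) (ci : dblTgt s t h = i)
    (u : X →ₗ[ℂ] J (dblSrc s t h)) :
    Psi s t J i Wi y gi X z (Pi.single (dblBar h) (cmap J (dblTgt_bar s t h).symm u), 0) =
      dblEps (dblBar h) • cmap J ci ((y h) ∘ₗ u) +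
        (if cs : dblSrc s t h = i then
          dblEps h • cmap J ((dblTgt_bar s t h).trans cs)
            ((cmap J (dblTgt_bar s t h).symm u) ∘ₗ z h)
        else 0) := by
  subst ci
  rw [Psi_apply, LinearMap.comp_zero, add_zero]
  obtain a | a := h
  · rw [Fintype.sum_sum_type]
    rw [Finset.sum_eq_single_of_mem a (Finset.mem_univ a), Finset.sum_eq_single_of_mem a
      (Finset.mem_univ a)]
    · dsimp only
      rw [Pi.single_eq_same, Pi.single_eq_of_ne (show (Sum.inl a : DblH Ω) ≠ dblBar (Sum.inl a) by simp [dblBar]),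
        Pi.single_eq_of_ne (show dblBar (Sum.inr a : DblH Ω) ≠ dblBar (Sum.inl a) by simp [dblBar])]
      erw [Pi.single_eq_same]
      simp only [cmap_zero, LinearMap.comp_zero, LinearMap.zero_comp, ite_self, add_zero, zero_add]
      rw [dif_pos (show dblSrc s t (Sum.inr a) = dblTgt s t (Sum.inl a) from rfl), if_pos trivial, add_comm]
      rfl
    · intro b _ hba
      by_cases c : dblSrc s t (Sum.inr b) = dblTgt s t (Sum.inl a)
      · rw [dif_pos c]
        dsimp only
        rw [Pi.single_eq_of_ne (show (Sum.inr b : DblH Ω) ≠ dblBar (Sum.inl a) by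
          simpa [dblBar] using hba)]
        rw [Pi.single_eq_of_ne (show (dblBar (Sum.inr b) : DblH Ω) ≠ dblBar (Sum.inl a) by
          simpa [dblBar] using hba)]
        simp
      · rw [dif_neg c]
    · intro b _ hba
      by_cases c : dblSrc s t (Sum.inl b) = dblTgt s t (Sum.inl a)
      · rw [dif_pos c]
        dsimp only
        rw [Pi.single_eq_of_ne (show (Sum.inl b : DblH Ω) ≠ dblBar (Sum.inl a) by
          simp [dblBar])]
        rw [Pi.single_eq_of_ne (show (dblBar (Sum.inl b) : DblH Ω) ≠ dblBar (Sum.inl a) by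
          simpa [dblBar] using hba)]
        simp
      · rw [dif_neg c]
  · rw [Fintype.sum_sum_type]
    rw [Finset.sum_eq_single_of_mem a (Finset.mem_univ a), Finset.sum_eq_single_of_mem a
      (Finset.mem_univ a)]
    · dsimp only
      rw [Pi.single_eq_same, Pi.single_eq_of_ne (show (Sum.inr a : DblH Ω) ≠ dblBar (Sum.inr a) by simp [dblBar]),
        Pi.single_eq_of_ne (show dblBar (Sum.inl a : DblH Ω) ≠ dblBar (Sum.inr a) by simp [dblBar])]
      erw [Pi.single_eq_same]
      simp only [cmap_zero, LinearMap.comp_zero, LinearMap.zero_comp, ite_self, add_zero, zero_add]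
      rw [dif_pos (show dblSrc s t (Sum.inl a) = dblTgt s t (Sum.inr a) from rfl), if_pos trivial]
      rfl
    · intro b _ hba
      by_cases c : dblSrc s t (Sum.inr b) = dblTgt s t (Sum.inr a)
      · rw [dif_pos c]
        dsimp only
        rw [Pi.single_eq_of_ne (show (Sum.inr b : DblH Ω) ≠ dblBar (Sum.inr a) by
          simp [dblBar])]
        rw [Pi.single_eq_of_ne (show (dblBar (Sum.inr b) : DblH Ω) ≠ dblBar (Sum.inr a) by
          simpa [dblBar] using hba)]
        simp
      · rw [dif_neg c]
    · intro b _ hba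
      by_cases c : dblSrc s t (Sum.inl b) = dblTgt s t (Sum.inr a)
      · rw [dif_pos c]
        dsimp only
        rw [Pi.single_eq_of_ne (show (Sum.inl b : DblH Ω) ≠ dblBar (Sum.inr a) by
          simpa [dblBar] using hba)]
        rw [Pi.single_eq_of_ne (show (dblBar (Sum.inl b) : DblH Ω) ≠ dblBar (Sum.inr a) by
          simp [dblBar])]
        simp
      · rw [dif_neg c]


theorem cvec_trans {a b c : I} (e1 : a = b) (e2 : b = c) (v : J a) :
    cvec J e2 (cvec J e1 v) = cvec J (e1.trans e2) v := by subst e1; subst e2; rfl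

theorem dblEps_mul_self (h : DblH Ω) : dblEps h * dblEps h = 1 := by
  cases h <;> simp [dblEps]

/-- The candidate subspace at vertex `i`. -/
def Sbig : Submodule ℂ (J i) where
  carrier := {v | ∀ f : X →ₗ[ℂ] ℂ,
    f.smulRight v ∈ LinearMap.range (Psi s t J i Wi y gi X z)}
  add_mem' := by
    intro v w hv hw f
    have e : f.smulRight (v + w) = f.smulRight v + f.smulRight w := by ext x; simp
    rw [e]; exact add_mem (hv f) (hw f)
  zero_mem' := by
    intro f
    have e : f.smulRight (0 : J i) = 0 := by ext x; simp
    rw [e]; exact zero_mem _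
  smul_mem' := by
    intro c v hv f
    have e : f.smulRight (c • v) = ((c • f).smulRight v : X →ₗ[ℂ] J i) := by
      ext x; simp [smul_smul, mul_comm]
    rw [e]; exact hv (c • f)

theorem mem_Sbig (v : J i) : v ∈ Sbig s t J i Wi y gi X z ↔ ∀ f : X →ₗ[ℂ] ℂ,
    f.smulRight v ∈ LinearMap.range (Psi s t J i Wi y gi X z) := Iff.rfl

theorem mem_cast_submodule {j : I} (hj : j = i) (T : Submodule ℂ (J i)) (v : J j) :
    v ∈ (hj.symm ▸ T : Submodule ℂ (J j)) ↔ cvec J hj v ∈ T := by subst hj; exact Iff.rfl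

end aux


/-- if the smallest `I`-graded subspace of `⊕ⱼ 𝔍ⱼ` containing `⊕_{j≠i} 𝔍ⱼ`
and the image of `gᵢ : Wᵢ → 𝔍ᵢ`, and invariant under the representation `y`, is
everything, then the map
`ψ(η,θ) = Σ_{h : s(h)=i} ε(h)·(y_{h̄} ∘ η_h + η_{h̄} ∘ z_h) + gᵢ ∘ θ` (the term
`η_{h̄} ∘ z_h` present only for loops at `i`) is surjective onto `Hom(X, 𝔍ᵢ)`. -/
theorem psi_surjective
    (I Ω : Type) [Fintype I] [Fintype Ω] [DecidableEq I]
    (s t : Ω → I)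
    (J : I → Type) [∀ j, AddCommGroup (J j)] [∀ j, Module ℂ (J j)]
    [∀ j, FiniteDimensional ℂ (J j)]
    (i : I)
    (Wi : Type) [AddCommGroup Wi] [Module ℂ Wi] [FiniteDimensional ℂ Wi]
    (y : ∀ h : DblH Ω, J (dblSrc s t h) →ₗ[ℂ] J (dblTgt s t h))
    (gi : Wi →ₗ[ℂ] J i)
    (X : Type) [AddCommGroup X] [Module ℂ X] [FiniteDimensional ℂ X]
    (z : DblH Ω → Module.End ℂ X)
    (hgen : ∀ S : ∀ j, Submodule ℂ (J j),
      (∀ j, j ≠ i → S j = ⊤) →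
      LinearMap.range gi ≤ S i →
      (∀ h : DblH Ω, ∀ v ∈ S (dblSrc s t h), y h v ∈ S (dblTgt s t h)) →
      S i = ⊤) :
    ∀ w : X →ₗ[ℂ] J i,
      ∃ (η : ∀ h : DblH Ω, X →ₗ[ℂ] J (dblTgt s t h)) (θ : X →ₗ[ℂ] Wi),
        (∑ h : DblH Ω,
          if c : dblSrc s t h = i then
            dblEps h •
              cmap J ((dblTgt_bar s t h).trans c)
                ((y (dblBar h)) ∘ₗ (cmap J (dblSrc_bar s t h).symm (η h)) +
                  (if dblTgt s t h = i then (η (dblBar h)) ∘ₗ (z h) else 0))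
          else 0) + gi ∘ₗ θ = w := by
  intro w
  letI : DecidableEq Ω := Classical.decEq Ω
  have hSieq : (if hj : i = i then hj.symm ▸ (Sbig s t J i Wi y gi X z) else (⊤ : Submodule ℂ (J i))) = (Sbig s t J i Wi y gi X z) :=
    dif_pos rfl
  -- hypothesis 1 of hgen
  have h1 : ∀ j, j ≠ i → (if hj : j = i then hj.symm ▸ (Sbig s t J i Wi y gi X z) else (⊤ : Submodule ℂ (J j))) = ⊤ :=
    fun j hj => dif_neg hj
  -- hypothesis 2
  have h2 : LinearMap.range gi ≤ (if hj : i = i then hj.symm ▸ (Sbig s t J i Wi y gi X z) else ⊤) := by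
    rw [hSieq]
    rintro _ ⟨wv, rfl⟩ f
    exact ⟨(0, f.smulRight wv), by rw [Psi_zero_left, smulRight_comp_left]⟩
  -- hypothesis 3 : invariance
  have h3 : ∀ h : DblH Ω, ∀ v ∈ (if hj : dblSrc s t h = i then hj.symm ▸ (Sbig s t J i Wi y gi X z) else ⊤),
      y h v ∈ (if hj : dblTgt s t h = i then hj.symm ▸ (Sbig s t J i Wi y gi X z) else ⊤) := by
    intro h v hv
    by_cases ci : dblTgt s t h = i
    · rw [dif_pos ci, mem_cast_submodule J i (hj := ci), mem_Sbig]
      intro f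
      have hps := Psi_single s t J i Wi y gi X z h ci (f.smulRight v)
      have hc1 : cmap J ci ((y h) ∘ₗ f.smulRight v) = f.smulRight (cvec J ci (y h v)) := by
        rw [smulRight_comp_left, cmap_smulRight]
      have key : f.smulRight (cvec J ci (y h v)) = dblEps (dblBar h) •
          (Psi s t J i Wi y gi X z
            (Pi.single (dblBar h) (cmap J (dblTgt_bar s t h).symm (f.smulRight v)), 0)
          - (if cs : dblSrc s t h = i then
              dblEps h • cmap J ((dblTgt_bar s t h).trans cs)
                ((cmap J (dblTgt_bar s t h).symm (f.smulRight v)) ∘ₗ z h)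
            else 0)) := by
        rw [hps, add_sub_cancel_right, smul_smul, dblEps_mul_self, one_smul, hc1]
      rw [key]
      refine Submodule.smul_mem _ _ (sub_mem (LinearMap.mem_range_self _ _) ?_)
      by_cases cs : dblSrc s t h = i
      · rw [dif_pos cs]
        refine Submodule.smul_mem _ _ ?_
        have hc2 : cmap J ((dblTgt_bar s t h).trans cs)
            ((cmap J (dblTgt_bar s t h).symm (f.smulRight v)) ∘ₗ z h)
            = (f ∘ₗ z h).smulRight (cvec J cs v) := by
          rw [cmap_smulRight, smulRight_comp_right, cmap_smulRight, cvec_trans]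
        rw [hc2]
        rw [dif_pos cs] at hv
        have hv' := (mem_cast_submodule J i (hj := cs) (Sbig s t J i Wi y gi X z) v).mp hv
        exact ((mem_Sbig s t J i Wi y gi X z _).mp hv') (f ∘ₗ z h)
      · rw [dif_neg cs]; exact zero_mem _
    · rw [dif_neg ci]; trivial
  have htop : (Sbig s t J i Wi y gi X z) = ⊤ := by
    rw [← hSieq]
    exact hgen (fun j => if hj : j = i then hj.symm ▸ (Sbig s t J i Wi y gi X z) else ⊤) h1 h2 h3
  have hall : ∀ (v : J i) (f : X →ₗ[ℂ] ℂ),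
      f.smulRight v ∈ LinearMap.range (Psi s t J i Wi y gi X z) := by
    intro v f
    have hv : v ∈ (Sbig s t J i Wi y gi X z) := by rw [htop]; trivial
    rw [mem_Sbig] at hv
    exact hv f
  have hw : w ∈ LinearMap.range (Psi s t J i Wi y gi X z) := by
    have B : Module.Basis (Module.Free.ChooseBasisIndex ℂ X) ℂ X := Module.Free.chooseBasis ℂ X
    have hrep : w = ∑ k, (B.coord k).smulRight (w (B k)) := by
      ext x
      simp only [LinearMap.coe_sum, Finset.sum_apply, LinearMap.smulRight_apply,
        Module.Basis.coord_apply]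
      conv_lhs => rw [← B.sum_repr x]
      rw [map_sum]
      simp
    rw [hrep]
    exact Submodule.sum_mem _ fun k _ => hall _ _
  obtain ⟨p, hp⟩ := hw
  exact ⟨p.1, p.2, hp⟩
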